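/- Let 𝔇_{(Q,n)} be simply connected with box of restricted coweights Box = {λ̌ ∈ Y₊ : 0 ≤ ⟨λ̌, a_i⟩ < n(ǎ_i) for all i ∈ I}. Then every dominant coweight λ̌ ∈ Y₊ admits a unique decomposition λ̌ = λ̌₀ + ζ̌ with λ̌₀ ∈ Box and ζ̌ ∈ Ỹ₊, where Ỹ₊ is the set of dominant coweights in the twisted lattice Ỹ. -/

import Mathlib

section Aux

variable {I : Type*} [Fintype I] [DecidableEq I]
    {Y : Type*} [AddCommGroup Y]

lemma aux_pair_sum (pair : Y →+ I → ℤ) (ω : I → Y)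
    (hω : ∀ i j, pair (ω i) j = if i = j then 1 else 0) (f : I → ℤ) (j : I) :
    pair (∑ i, f i • ω i) j = f j := by
  have : pair (∑ i, f i • ω i) = ∑ i, f i • pair (ω i) := by
    rw [map_sum]; simp
  rw [this]
  simp only [Finset.sum_apply, Pi.smul_apply, hω, smul_eq_mul]
  rw [Finset.sum_eq_single j]
  · simp
  · intro b _ hb; simp [hb]
  · intro h; exact absurd (Finset.mem_univ j) h

lemma aux_mem_repr (pair : Y →+ I → ℤ) (n : I → ℕ) (ω : I → Y)
    (hω : ∀ i j, pair (ω i) j = if i = j then 1 else 0) (z : Y)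
    (hz : z ∈ AddSubgroup.closure (Set.range fun i => (n i : ℤ) • ω i)) :
    z = ∑ i, pair z i • ω i := by
  induction hz using AddSubgroup.closure_induction with
  | mem x hx =>
      obtain ⟨i, rfl⟩ := hx
      have hp : ∀ j, pair ((n i : ℤ) • ω i) j = if i = j then (n i : ℤ) else 0 := by
        intro j
        rw [map_zsmul]
        simp only [Pi.smul_apply, smul_eq_mul, hω i j]
        split <;> simp
      simp only [hp]
      rw [Finset.sum_eq_single i]
      · simp
      · intro b _ hb; simp [Ne.symm hb]
      · intro h; exact absurd (Finset.mem_univ i) h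
  | zero => simp
  | add x y _ _ hx hy =>
      rw [map_add]
      conv_lhs => rw [hx, hy]
      rw [← Finset.sum_add_distrib]
      exact Finset.sum_congr rfl fun i _ => by rw [← add_smul]; rfl
  | neg x _ hx =>
      rw [map_neg]
      conv_lhs => rw [hx]
      rw [← Finset.sum_neg_distrib]
      exact Finset.sum_congr rfl fun i _ => by rw [← neg_smul]; rfl

lemma aux_mem_dvd (pair : Y →+ I → ℤ) (n : I → ℕ) (ω : I → Y)
    (hω : ∀ i j, pair (ω i) j = if i = j then 1 else 0) (z : Y)
    (hz : z ∈ AddSubgroup.closure (Set.range fun i => (n i : ℤ) • ω i)) (j : I) :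
    (n j : ℤ) ∣ pair z j := by
  induction hz using AddSubgroup.closure_induction with
  | mem x hx =>
      obtain ⟨i, rfl⟩ := hx
      rw [map_zsmul]
      simp only [Pi.smul_apply, smul_eq_mul, hω i j]
      split
      · next h => subst h; simp
      · simp
  | zero => simp
  | add x y _ _ hx hy => rw [map_add]; exact dvd_add hx hy
  | neg x _ hx => rw [map_neg]; exact (dvd_neg).2 hx

end Aux

/-- Box decomposition.  Let pair(·,a_i) be the pairings of the coweight
lattice Y with the simple roots, n_i = n(ǎ_i) > 0, and ω_i the fundamental coweights
(pair(ω_i, a_j) = δ_{ij}), so that the twisted lattice Ỹ is generated by the n_i ω_i.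
Then every dominant λ̌ ∈ Y₊ decomposes uniquely as λ̌ = λ̌₀ + ζ̌ with λ̌₀ in the box
(0 ≤ ⟨λ̌₀,a_i⟩ < n_i for all i) and ζ̌ ∈ Ỹ₊ dominant in the twisted lattice. -/
theorem stmt_13 (I : Type*) [Fintype I] [DecidableEq I]
    (Y : Type*) [AddCommGroup Y]
    (pair : Y →+ I → ℤ)
    (n : I → ℕ) (hn : ∀ i, 0 < n i)
    (ω : I → Y) (hω : ∀ i j, pair (ω i) j = if i = j then 1 else 0)
    (lv : Y) (hdom : ∀ i, 0 ≤ pair lv i) :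
    ∃! d : Y × Y,
      (∀ i, 0 ≤ pair d.1 i ∧ pair d.1 i < n i) ∧
      d.2 ∈ AddSubgroup.closure (Set.range fun i => (n i : ℤ) • ω i) ∧
      (∀ i, 0 ≤ pair d.2 i) ∧
      lv = d.1 + d.2 := by
  set ζ : Y := ∑ i, (pair lv i / (n i : ℤ)) • ((n i : ℤ) • ω i) with hζdef
  have hζrepr : ζ = ∑ i, ((pair lv i / (n i : ℤ)) * (n i : ℤ)) • ω i := by
    exact Finset.sum_congr rfl fun i _ => by rw [mul_smul]
  have hpairζ : ∀ j, pair ζ j = (pair lv j / (n j : ℤ)) * (n j : ℤ) := by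
    intro j; rw [hζrepr]; exact aux_pair_sum pair ω hω _ j
  have hnpos : ∀ i, (0:ℤ) < (n i : ℤ) := fun i => Int.natCast_pos.mpr (hn i)
  have hsubpair : ∀ j, pair (lv - ζ) j = pair lv j % (n j : ℤ) := by
    intro j
    rw [map_sub]
    simp only [Pi.sub_apply]
    rw [hpairζ j, Int.emod_def]
    ring
  refine ⟨(lv - ζ, ζ), ⟨?_, ?_, ?_, ?_⟩, ?_⟩
  · intro i
    rw [hsubpair i]
    constructor
    · exact Int.emod_nonneg _ (ne_of_gt (hnpos i))
    · exact Int.emod_lt_of_pos _ (hnpos i)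
  · exact AddSubgroup.sum_mem _ fun i _ =>
      AddSubgroup.zsmul_mem _ (AddSubgroup.subset_closure (Set.mem_range_self i)) _
  · intro i
    rw [hpairζ i]
    exact mul_nonneg (Int.ediv_nonneg (hdom i) (le_of_lt (hnpos i))) (le_of_lt (hnpos i))
  · show lv = (lv - ζ) + ζ
    abel
  · rintro ⟨b, z⟩ ⟨hbox, hmem, -, hsum⟩
    have hdvd : ∀ j, (n j : ℤ) ∣ pair z j := aux_mem_dvd pair n ω hω z hmem
    have hpairb : ∀ j, pair b j = pair lv j % (n j : ℤ) := by
      intro j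
      obtain ⟨k, hk⟩ := hdvd j
      have hl : pair lv j = pair b j + (n j : ℤ) * k := by
        rw [hsum, map_add]; simp [hk]
      rw [hl, Int.add_mul_emod_self_left,
        Int.emod_eq_of_lt (hbox j).1 (hbox j).2]
    have hpairz : ∀ j, pair z j = pair ζ j := by
      intro j
      have hl : pair lv j = pair b j + pair z j := by rw [hsum, map_add]; simp
      have hl2 : pair (lv - ζ) j = pair lv j - pair ζ j := by
        rw [map_sub]; simp
      have h1 := hsubpair j
      have h2 := hpairb j
      omega
    have hz : z = ζ := by
      rw [aux_mem_repr pair n ω hω z hmem, hζrepr]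
      exact Finset.sum_congr rfl fun i _ => by rw [hpairz i, hpairζ i]
    have hb : b = lv - ζ := by
      have h := hsum
      rw [show (b, z).2 = z from rfl, hz] at h
      have : lv - ζ = b := by rw [h]; show b + ζ - ζ = b; abel
      exact this.symm
    rw [Prod.mk.injEq]
    exact ⟨hb, hz⟩
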